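/- For natural numbers k ≤ N with k ≥ 1, the sum over j from 0 to k of C(2N, 2j)·C(N-j, N-k) equals (2^(2k-1)·N/k)·C(k+N-1, N-k). -/

import Mathlib

open Finset

/-- guarded binomial coefficient with integer lower index -/
def ch (n : ℕ) (r : ℤ) : ℤ := if 0 ≤ r then (n.choose r.toNat : ℤ) else 0

lemma ch_ofNat (n k : ℕ) : ch n (k : ℤ) = (n.choose k : ℤ) := by simp [ch]

lemma ch_neg (n : ℕ) {r : ℤ} (h : r < 0) : ch n r = 0 := by
  rw [ch, if_neg (by omega)]

lemma ch_zero_of_lt (n : ℕ) {r : ℤ} (h : (n : ℤ) < r) : ch n r = 0 := by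
  rw [ch, if_pos (by omega)]
  norm_cast
  exact Nat.choose_eq_zero_of_lt (by omega)

lemma ch_pascal (n : ℕ) (r : ℤ) : ch (n+1) r = ch n r + ch n (r - 1) := by
  rcases lt_trichotomy r 0 with h | h | h
  · rw [ch_neg _ h, ch_neg _ h, ch_neg _ (by omega)]; ring
  · subst h; simp [ch]
  · have h0 : r.toNat = (r-1).toNat + 1 := by omega
    rw [ch, ch, ch, if_pos (by omega), if_pos (by omega), if_pos (by omega), h0,
      Nat.choose_succ_succ']
    push_cast; ring

lemma ch_pascal2 (n : ℕ) (r : ℤ) :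
    ch (n+2) r = ch n r + 2 * ch n (r-1) + ch n (r-2) := by
  rw [show n+2 = (n+1)+1 from rfl, ch_pascal, ch_pascal, ch_pascal]
  have : r - 1 - 1 = r - 2 := by ring
  rw [this]; ring

def p (N k : ℕ) : ℤ :=
  ∑ j ∈ Finset.range (k+1), ch (2*N) (2*(j:ℤ)) * ch (N-j) ((k:ℤ) - (j:ℤ))

def q (N k : ℕ) : ℤ :=
  ∑ j ∈ Finset.range (k+1), ch (2*N) (2*(j:ℤ)+1) * ch (N-1-j) ((k:ℤ) - (j:ℤ))

lemma p_zero (N : ℕ) : p N 0 = 1 := by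
  simp [p, ch]

lemma q_zero (N : ℕ) : q N 0 = 2 * N := by
  simp [q, ch, Nat.choose_one_right]

-- sum lemmas (shared by p_rec and q_rec)
lemma TL1 (N K : ℕ) (h1 : 1 ≤ K) :
    ∑ j ∈ range (K+1), ch (2*N) (2*(j:ℤ)+1) * ch (N-1-j) ((K:ℤ)-1-(j:ℤ))
      = q N (K-1) := by
  rw [Finset.sum_range_succ, ch_neg (N-1-K) (by omega), mul_zero, add_zero, q]
  apply Finset.sum_congr (by rw [show K-1+1 = K by omega])
  intro j hj
  have e : ((K-1 : ℕ) : ℤ) - j = (K:ℤ) - 1 - j := by omega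
  rw [e]

lemma TL2 (N K : ℕ) (h1 : 1 ≤ K) :
    ∑ j ∈ range (K+1), ch (2*N) (2*(j:ℤ)-1) * ch (N-j) ((K:ℤ)-(j:ℤ))
      = q N (K-1) := by
  rw [Finset.sum_range_succ']
  have e0 : ch (2*N) (2*((0:ℕ):ℤ)-1) = 0 := ch_neg _ (by norm_num)
  rw [e0, zero_mul, add_zero, q]
  apply Finset.sum_congr (by rw [show K-1+1 = K by omega])
  intro i hi
  have e1 : 2*((i+1 : ℕ):ℤ) - 1 = 2*(i:ℤ)+1 := by push_cast; ring
  have e2 : N - (i+1) = N - 1 - i := by omega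
  have e3 : (K:ℤ) - ((i+1 : ℕ):ℤ) = ((K-1:ℕ):ℤ) - (i:ℤ) := by omega
  rw [e1, e2, e3]

lemma TL3 (N K : ℕ) (h1 : 1 ≤ K) :
    ∑ j ∈ range (K+1), ch (2*N) (2*(j:ℤ)) * ch (N-j) ((K:ℤ)-1-(j:ℤ))
      = p N (K-1) := by
  rw [Finset.sum_range_succ, ch_neg (N-K) (by omega), mul_zero, add_zero, p]
  apply Finset.sum_congr (by rw [show K-1+1 = K by omega])
  intro j hj
  have e : ((K-1 : ℕ) : ℤ) - j = (K:ℤ) - 1 - j := by omega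
  rw [e]

lemma q_rec (N K : ℕ) (h1 : 1 ≤ K) (hK : K ≤ N) :
    q (N+1) K = 2 * p N K + q N K + 2 * q N (K-1) := by
  have step : ∀ j ∈ range (K+1),
      ch (2*(N+1)) (2*(j:ℤ)+1) * ch (N+1-1-j) ((K:ℤ)-(j:ℤ))
        = 2 * (ch (2*N) (2*(j:ℤ)) * ch (N-j) ((K:ℤ)-(j:ℤ)))
          + (ch (2*N) (2*(j:ℤ)+1) * ch (N-1-j) ((K:ℤ)-(j:ℤ))
             + ch (2*N) (2*(j:ℤ)+1) * ch (N-1-j) ((K:ℤ)-1-(j:ℤ)))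
          + ch (2*N) (2*(j:ℤ)-1) * ch (N-j) ((K:ℤ)-(j:ℤ)) := by
    intro j hj
    have hjK : j ≤ K := by
      have := mem_range.mp hj; omega
    have hN11 : N+1-1-j = N - j := by omega
    have hc2 : ch (2*(N+1)) (2*(j:ℤ)+1)
        = ch (2*N) (2*(j:ℤ)+1) + 2 * ch (2*N) (2*(j:ℤ)) + ch (2*N) (2*(j:ℤ)-1) := by
      rw [show 2*(N+1) = 2*N+2 by ring, ch_pascal2,
        show 2*(j:ℤ)+1-1 = 2*(j:ℤ) by ring, show 2*(j:ℤ)+1-2 = 2*(j:ℤ)-1 by ring]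
    rw [hN11, hc2]
    rcases Nat.lt_or_ge j N with h | h
    · have hX : ch (N-j) ((K:ℤ)-(j:ℤ))
          = ch (N-1-j) ((K:ℤ)-(j:ℤ)) + ch (N-1-j) ((K:ℤ)-1-(j:ℤ)) := by
        rw [show N - j = (N-1-j) + 1 by omega, ch_pascal,
          show (K:ℤ)-(j:ℤ)-1 = (K:ℤ)-1-(j:ℤ) by ring]
      rw [hX]; ring
    · have hA : ch (2*N) (2*(j:ℤ)+1) = 0 := ch_zero_of_lt _ (by omega)
      rw [hA]; ring
  rw [q, Finset.sum_congr rfl step, Finset.sum_add_distrib, Finset.sum_add_distrib,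
    Finset.sum_add_distrib, ← Finset.mul_sum, TL1 N K h1, TL2 N K h1, ← p, ← q]
  ring

lemma TL4 (N K : ℕ) (h1 : 1 ≤ K) (hK : K ≤ N) :
    ∑ j ∈ range (K+1), ch (2*N) (2*(j:ℤ)-2)
        * (ch (N-j) ((K:ℤ)-(j:ℤ)) + ch (N-j) ((K:ℤ)-1-(j:ℤ))) = p N (K-1) := by
  have step : ∀ j ∈ range (K+1),
      ch (2*N) (2*(j:ℤ)-2) * (ch (N-j) ((K:ℤ)-(j:ℤ)) + ch (N-j) ((K:ℤ)-1-(j:ℤ)))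
        = ch (2*N) (2*(j:ℤ)-2) * ch (N+1-j) ((K:ℤ)-(j:ℤ)) := by
    intro j hj
    have hjK : j ≤ K := by have := mem_range.mp hj; omega
    rw [show N+1-j = (N-j)+1 by omega, ch_pascal,
      show (K:ℤ)-(j:ℤ)-1 = (K:ℤ)-1-(j:ℤ) by ring]
  rw [Finset.sum_congr rfl step, Finset.sum_range_succ']
  have e0 : ch (2*N) (2*((0:ℕ):ℤ)-2) = 0 := ch_neg _ (by norm_num)
  rw [e0, zero_mul, add_zero, p]
  apply Finset.sum_congr (by rw [show K-1+1 = K by omega])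
  intro i hi
  have hiK : i < K := by have := mem_range.mp hi; omega
  have e1 : 2*((i+1 : ℕ):ℤ) - 2 = 2*(i:ℤ) := by push_cast; ring
  have e2 : N + 1 - (i+1) = N - i := by omega
  have e3 : (K:ℤ) - ((i+1 : ℕ):ℤ) = ((K-1:ℕ):ℤ) - (i:ℤ) := by omega
  rw [e1, e2, e3]

lemma p_rec (N K : ℕ) (h1 : 1 ≤ K) (hK : K ≤ N) :
    p (N+1) K = p N K + 2 * p N (K-1) + 2 * q N (K-1)
      + 2 * ∑ j ∈ range (K+1), ch (2*N) (2*(j:ℤ)-1) * ch (N-j) ((K:ℤ)-1-(j:ℤ)) := by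
  have step : ∀ j ∈ range (K+1),
      ch (2*(N+1)) (2*(j:ℤ)) * ch (N+1-j) ((K:ℤ)-(j:ℤ))
        = ch (2*N) (2*(j:ℤ)) * ch (N-j) ((K:ℤ)-(j:ℤ))
          + ch (2*N) (2*(j:ℤ)) * ch (N-j) ((K:ℤ)-1-(j:ℤ))
          + 2 * (ch (2*N) (2*(j:ℤ)-1) * ch (N-j) ((K:ℤ)-(j:ℤ)))
          + 2 * (ch (2*N) (2*(j:ℤ)-1) * ch (N-j) ((K:ℤ)-1-(j:ℤ)))
          + ch (2*N) (2*(j:ℤ)-2)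
              * (ch (N-j) ((K:ℤ)-(j:ℤ)) + ch (N-j) ((K:ℤ)-1-(j:ℤ))) := by
    intro j hj
    have hjK : j ≤ K := by have := mem_range.mp hj; omega
    have hc2 : ch (2*(N+1)) (2*(j:ℤ))
        = ch (2*N) (2*(j:ℤ)) + 2 * ch (2*N) (2*(j:ℤ)-1) + ch (2*N) (2*(j:ℤ)-2) := by
      rw [show 2*(N+1) = 2*N+2 by ring, ch_pascal2]
    have hXY : ch (N+1-j) ((K:ℤ)-(j:ℤ))
        = ch (N-j) ((K:ℤ)-(j:ℤ)) + ch (N-j) ((K:ℤ)-1-(j:ℤ)) := by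
      rw [show N+1-j = (N-j)+1 by omega, ch_pascal,
        show (K:ℤ)-(j:ℤ)-1 = (K:ℤ)-1-(j:ℤ) by ring]
    rw [hc2, hXY]; ring
  rw [p, Finset.sum_congr rfl step, Finset.sum_add_distrib, Finset.sum_add_distrib,
    Finset.sum_add_distrib, Finset.sum_add_distrib, ← Finset.mul_sum, ← Finset.mul_sum,
    TL4 N K h1 hK, TL2 N K h1, TL3 N K h1, ← p]
  ring

lemma U_eq (N K : ℕ) (h2 : 2 ≤ K) :
    ∑ j ∈ range (K+1), ch (2*N) (2*(j:ℤ)-1) * ch (N-j) ((K:ℤ)-1-(j:ℤ))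
      = q N (K-2) := by
  obtain ⟨m, rfl⟩ : ∃ m, K = m+2 := ⟨K-2, by omega⟩
  rw [Finset.sum_range_succ']
  have e0 : ch (2*N) (2*((0:ℕ):ℤ)-1) = 0 := ch_neg _ (by norm_num)
  rw [e0, zero_mul, add_zero]
  have step : ∀ i ∈ range (m+2),
      ch (2*N) (2*((i+1 : ℕ):ℤ)-1) * ch (N-(i+1)) (((m+2:ℕ):ℤ)-1-((i+1:ℕ):ℤ))
        = ch (2*N) (2*(i:ℤ)+1) * ch (N-1-i) (((m+2:ℕ):ℤ)-2-(i:ℤ)) := by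
    intro i hi
    have e1 : 2*((i+1 : ℕ):ℤ) - 1 = 2*(i:ℤ)+1 := by push_cast; ring
    have e2 : N - (i+1) = N - 1 - i := by omega
    have e3 : ((m+2:ℕ):ℤ) - 1 - ((i+1 : ℕ):ℤ) = ((m+2:ℕ):ℤ)-2-(i:ℤ) := by
      push_cast; ring
    rw [e1, e2, e3]
  rw [Finset.sum_congr rfl step, Finset.sum_range_succ]
  have etop : ch (N-1-(m+1)) (((m+2:ℕ):ℤ)-2-((m+1:ℕ):ℤ)) = 0 := ch_neg _ (by push_cast; omega)
  rw [etop, mul_zero, add_zero, q, show m+2-2 = m by omega]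
  apply Finset.sum_congr rfl
  intro i hi
  have e : ((m:ℕ):ℤ) - (i:ℤ) = ((m+2:ℕ):ℤ)-2-(i:ℤ) := by push_cast; ring
  rw [e]

lemma U_one (N : ℕ) :
    ∑ j ∈ range (1+1), ch (2*N) (2*(j:ℤ)-1) * ch (N-j) (((1:ℕ):ℤ)-1-(j:ℤ)) = 0 := by
  rw [Finset.sum_range_succ, Finset.sum_range_succ, Finset.sum_range_zero]
  have e0 : ch (2*N) (2*((0:ℕ):ℤ)-1) = 0 := ch_neg _ (by norm_num)
  have e1 : ch (N-1) (((1:ℕ):ℤ)-1-((1:ℕ):ℤ)) = 0 := ch_neg _ (by norm_num)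
  rw [e0, e1, zero_mul, mul_zero]
  ring

lemma interleave (f : ℕ → ℤ) (n : ℕ) :
    ∑ i ∈ range (2*n), f i = ∑ j ∈ range n, (f (2*j) + f (2*j+1)) := by
  induction n with
  | zero => simp
  | succ n ih =>
    rw [show 2*(n+1) = (2*n+1)+1 by ring, Finset.sum_range_succ, Finset.sum_range_succ,
      ih, Finset.sum_range_succ]
    ring

lemma q_diag (M : ℕ) : q M M = 0 := by
  rw [q]
  apply Finset.sum_eq_zero
  intro j hj
  have hjM : j ≤ M := by have := mem_range.mp hj; omega
  rcases eq_or_lt_of_le hjM with h | h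
  · subst h
    rw [ch_zero_of_lt (2*j) (by push_cast; omega), zero_mul]
  · rw [ch_zero_of_lt (M-1-j) (by omega), mul_zero]

lemma even_sum (M : ℕ) : ∑ j ∈ range (M+1), ch (2*M) (2*(j:ℤ)) + 
    ∑ j ∈ range (M+1), ch (2*M) (2*(j:ℤ)+1) = 2^(2*M) := by
  have e1 : ∀ j ∈ range (M+1), ch (2*M) (2*(j:ℤ)) = ((2*M).choose (2*j) : ℤ) := by
    intro j _
    rw [show 2*(j:ℤ) = ((2*j : ℕ) : ℤ) by push_cast; ring, ch_ofNat]
  have e2 : ∀ j ∈ range (M+1), ch (2*M) (2*(j:ℤ)+1) = ((2*M).choose (2*j+1) : ℤ) := by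
    intro j _
    rw [show 2*(j:ℤ)+1 = ((2*j+1 : ℕ) : ℤ) by push_cast; ring, ch_ofNat]
  rw [Finset.sum_congr rfl e1, Finset.sum_congr rfl e2, ← Finset.sum_add_distrib,
    ← interleave (fun i => ((2*M).choose i : ℤ)) (M+1)]
  have : ∑ i ∈ range (2*(M+1)), ((2*M).choose i : ℤ)
      = ∑ i ∈ range (2*M+1), ((2*M).choose i : ℤ) := by
    rw [show 2*(M+1) = (2*M+1)+1 by ring, Finset.sum_range_succ,
      Nat.choose_eq_zero_of_lt (by omega)]
    norm_num
  rw [this]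
  exact_mod_cast Nat.sum_range_choose (2*M)

lemma p_diag (M : ℕ) : p (M+1) (M+1) = 2^(2*M+1) := by
  have step : ∀ j ∈ range (M+2),
      ch (2*(M+1)) (2*(j:ℤ)) * ch (M+1-j) (((M+1:ℕ):ℤ)-(j:ℤ))
        = ch (2*M) (2*(j:ℤ)) + ch (2*M) (2*(j:ℤ)-1) + (ch (2*M) (2*(j:ℤ)-1)
            + ch (2*M) (2*(j:ℤ)-2)) := by
    intro j hj
    have hjM : j ≤ M+1 := by have := mem_range.mp hj; omega
    have hone : ch (M+1-j) (((M+1:ℕ):ℤ)-(j:ℤ)) = 1 := by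
      rw [show ((M+1:ℕ):ℤ)-(j:ℤ) = ((M+1-j : ℕ) : ℤ) by omega, ch_ofNat,
        Nat.choose_self]
      norm_num
    rw [hone, mul_one, show 2*(M+1) = 2*M+2 by ring, ch_pascal2]
    ring
  rw [p, Finset.sum_congr rfl step, Finset.sum_add_distrib, Finset.sum_add_distrib,
    Finset.sum_add_distrib]
  -- four sums
  have sA : ∑ j ∈ range (M+2), ch (2*M) (2*(j:ℤ))
      = ∑ j ∈ range (M+1), ch (2*M) (2*(j:ℤ)) := by
    rw [Finset.sum_range_succ, ch_zero_of_lt (2*M) (by push_cast; omega), add_zero]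
  have sB : ∑ j ∈ range (M+2), ch (2*M) (2*(j:ℤ)-1)
      = ∑ j ∈ range (M+1), ch (2*M) (2*(j:ℤ)+1) := by
    rw [Finset.sum_range_succ', ch_neg _ (by norm_num), add_zero]
    apply Finset.sum_congr rfl
    intro i _
    rw [show 2*((i+1:ℕ):ℤ)-1 = 2*(i:ℤ)+1 by push_cast; ring]
  have sC : ∑ j ∈ range (M+2), ch (2*M) (2*(j:ℤ)-2)
      = ∑ j ∈ range (M+1), ch (2*M) (2*(j:ℤ)) := by
    rw [Finset.sum_range_succ', ch_neg _ (by norm_num), add_zero]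
    apply Finset.sum_congr rfl
    intro i _
    rw [show 2*((i+1:ℕ):ℤ)-2 = 2*(i:ℤ) by push_cast; ring]
  rw [sA, sB, sC]
  have := even_sum M
  have h2 : (2:ℤ)^(2*M+1) = 2 * 2^(2*M) := by rw [pow_succ]; ring
  rw [h2]
  linarith

def PP (N k : ℕ) : ℤ :=
  if k = 0 then 1 else 2^(2*k-1) * (((N+k).choose (2*k) : ℤ) + ((N+k-1).choose (2*k) : ℤ))
def QQ (N k : ℕ) : ℤ := 2^(2*k+1) * ((N+k).choose (2*k+1) : ℤ)

lemma pow_fact (l : ℕ) : (2:ℤ)^(2*l+3) = 4 * 2^(2*l+1) := by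
  rw [show 2*l+3 = (2*l+1)+2 by ring, pow_add]; ring

lemma QQ_step (N l : ℕ) : QQ (N+1) (l+1) = 2 * PP N (l+1) + QQ N (l+1) + 2 * QQ N l := by
  simp only [PP, QQ, if_neg (by omega : ¬(l+1 = 0))]
  rw [show N+(l+1)-1 = N+l by omega, show 2*(l+1)-1 = 2*l+1 by omega,
    show N+1+(l+1) = N+l+2 by ring, show 2*(l+1)+1 = 2*l+3 by ring,
    show 2*(l+1) = 2*l+2 by ring, show N+(l+1) = N+l+1 by ring]
  rw [show (N+l+2).choose (2*l+3) = (N+l+1).choose (2*l+2) + (N+l+1).choose (2*l+3)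
      from Nat.choose_succ_succ' (N+l+1) (2*l+2),
    show (N+l+1).choose (2*l+2) = (N+l).choose (2*l+1) + (N+l).choose (2*l+2)
      from Nat.choose_succ_succ' (N+l) (2*l+1),
    show (N+l+1).choose (2*l+3) = (N+l).choose (2*l+2) + (N+l).choose (2*l+3)
      from Nat.choose_succ_succ' (N+l) (2*l+2)]
  rw [pow_fact]
  push_cast
  ring

lemma PP_step (N l : ℕ) :
    PP (N+1) (l+2) = PP N (l+2) + 2 * PP N (l+1) + 2 * QQ N (l+1) + 2 * QQ N l := by
  simp only [PP, QQ, if_neg (by omega : ¬(l+2 = 0)), if_neg (by omega : ¬(l+1 = 0))]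
  rw [show N+1+(l+2)-1 = N+l+2 by omega, show N+(l+2)-1 = N+l+1 by omega,
    show N+(l+1)-1 = N+l by omega, show 2*(l+2)-1 = 2*l+3 by omega,
    show 2*(l+1)-1 = 2*l+1 by omega,
    show N+1+(l+2) = N+l+3 by ring, show 2*(l+2) = 2*l+4 by ring,
    show N+(l+2) = N+l+2 by ring, show 2*(l+1)+1 = 2*l+3 by ring,
    show 2*(l+1) = 2*l+2 by ring, show N+(l+1) = N+l+1 by ring]
  rw [show (N+l+3).choose (2*l+4) = (N+l+2).choose (2*l+3) + (N+l+2).choose (2*l+4)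
      from Nat.choose_succ_succ' (N+l+2) (2*l+3),
    show (N+l+2).choose (2*l+4) = (N+l+1).choose (2*l+3) + (N+l+1).choose (2*l+4)
      from Nat.choose_succ_succ' (N+l+1) (2*l+3),
    show (N+l+2).choose (2*l+3) = (N+l+1).choose (2*l+2) + (N+l+1).choose (2*l+3)
      from Nat.choose_succ_succ' (N+l+1) (2*l+2),
    show (N+l+1).choose (2*l+4) = (N+l).choose (2*l+3) + (N+l).choose (2*l+4)
      from Nat.choose_succ_succ' (N+l) (2*l+3),
    show (N+l+1).choose (2*l+3) = (N+l).choose (2*l+2) + (N+l).choose (2*l+3)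
      from Nat.choose_succ_succ' (N+l) (2*l+2),
    show (N+l+1).choose (2*l+2) = (N+l).choose (2*l+1) + (N+l).choose (2*l+2)
      from Nat.choose_succ_succ' (N+l) (2*l+1)]
  rw [pow_fact]
  push_cast
  ring

lemma PP_step1 (N : ℕ) : PP (N+1) 1 = PP N 1 + 2 * PP N 0 + 2 * QQ N 0 := by
  simp only [PP, QQ, if_neg (by omega : ¬(1 = 0)), if_pos rfl]
  norm_num
  rw [show (N+1+1).choose 2 = (N+1).choose 1 + (N+1).choose 2
      from Nat.choose_succ_succ' (N+1) 1,
    show (N+1).choose 2 = N.choose 1 + N.choose 2 from Nat.choose_succ_succ' N 1,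
    show (N+1).choose 1 = N.choose 0 + N.choose 1 from Nat.choose_succ_succ' N 0,
    Nat.choose_zero_right, Nat.choose_one_right]
  push_cast
  ring

lemma PP_diag (N : ℕ) : PP (N+1) (N+1) = 2^(2*N+1) := by
  simp only [PP, if_neg (by omega : ¬(N+1 = 0))]
  rw [show 2*(N+1)-1 = 2*N+1 by omega, show N+1+(N+1)-1 = 2*N+1 by omega,
    show N+1+(N+1) = 2*N+2 by ring, show 2*(N+1) = 2*N+2 by ring,
    Nat.choose_self, Nat.choose_eq_zero_of_lt (by omega)]
  norm_num

lemma QQ_diag (N : ℕ) : QQ (N+1) (N+1) = 0 := by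
  simp only [QQ]
  rw [show N+1+(N+1) = 2*N+2 by ring, Nat.choose_eq_zero_of_lt (by omega)]
  norm_num

lemma PP_zero (N : ℕ) : PP N 0 = 1 := by simp [PP]
lemma QQ_zero (N : ℕ) : QQ N 0 = 2 * N := by simp [QQ]

lemma closed (N : ℕ) : ∀ k, k ≤ N → p N k = PP N k ∧ q N k = QQ N k := by
  induction N with
  | zero =>
    intro k hk
    interval_cases k
    exact ⟨by rw [p_zero, PP_zero], by rw [q_zero, QQ_zero]⟩
  | succ N ih =>
    intro k hk
    constructor
    · rcases Nat.eq_or_lt_of_le hk with hEq | hlt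
      · rw [hEq, p_diag, PP_diag]
      · have hkN : k ≤ N := by omega
        match k, hkN with
        | 0, _ => rw [p_zero, PP_zero]
        | 1, hkN =>
          rw [p_rec N 1 (by norm_num) hkN, U_one, PP_step1,
            (ih 1 hkN).1, (ih 0 (by omega)).1, (ih 0 (by omega)).2]
          ring
        | (l+2), hkN =>
          rw [p_rec N (l+2) (by omega) hkN, U_eq N (l+2) (by omega), PP_step,
            show l+2-1 = l+1 by omega, show l+2-2 = l by omega,
            (ih (l+2) hkN).1, (ih (l+1) (by omega)).1,
            (ih (l+1) (by omega)).2, (ih l (by omega)).2]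
    · rcases Nat.eq_or_lt_of_le hk with hEq | hlt
      · rw [hEq, q_diag, QQ_diag]
      · have hkN : k ≤ N := by omega
        match k, hkN with
        | 0, _ =>
          rw [q_zero, QQ]
          rw [Nat.add_zero, Nat.choose_one_right]
          push_cast; ring
        | (l+1), hkN =>
          rw [q_rec N (l+1) (by omega) hkN, QQ_step,
            show l+1-1 = l by omega,
            (ih (l+1) hkN).1, (ih (l+1) hkN).2, (ih l (by omega)).2]

lemma absorb (N l : ℕ) (h : l+1 ≤ N) :
    ((l:ℤ)+1) * (((N+l+1).choose (2*l+2) : ℤ) + ((N+l).choose (2*l+2) : ℤ))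
      = (N:ℤ) * ((N+l).choose (2*l+1) : ℤ) := by
  have h1 : (N+l+1).choose (2*l+2) = (N+l).choose (2*l+1) + (N+l).choose (2*l+2) :=
    Nat.choose_succ_succ' (N+l) (2*l+1)
  have h2 : ((N+l).choose (2*l+2) : ℤ) * (2*(l:ℤ)+2)
      = ((N+l).choose (2*l+1) : ℤ) * ((N:ℤ) - ((l:ℤ)+1)) := by
    have h := Nat.choose_succ_right_eq (N+l) (2*l+1)
    rw [show N+l-(2*l+1) = N-(l+1) by omega] at h
    rw [show (N:ℤ) - ((l:ℤ)+1) = ((N-(l+1) : ℕ) : ℤ) by omega]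
    exact_mod_cast h
  rw [h1]
  push_cast
  linear_combination h2

theorem binom_sum_identity2 (N k : ℕ) (hk : 1 ≤ k) (hkN : k ≤ N) :
    ∑ j ∈ Finset.range (k + 1),
      (Nat.choose (2 * N) (2 * j) : ℝ) * Nat.choose (N - j) (N - k)
      = 2 ^ (2 * k - 1) * N / k * Nat.choose (k + N - 1) (N - k) := by
  obtain ⟨l, rfl⟩ : ∃ l, k = l+1 := ⟨k-1, by omega⟩
  have hlN : l+1 ≤ N := hkN
  have hp : ((p N (l+1) : ℤ) : ℝ)
      = ∑ j ∈ Finset.range (l+1+1),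
          ((2*N).choose (2*j) : ℝ) * ((N-j).choose (N-(l+1)) : ℝ) := by
    rw [p]
    push_cast
    apply Finset.sum_congr rfl
    intro j hj
    have hj' : j ≤ l+1 := by have := Finset.mem_range.mp hj; omega
    have c1 : ch (2*N) (2*(j:ℤ)) = ((2*N).choose (2*j) : ℤ) := by
      rw [show 2*(j:ℤ) = ((2*j:ℕ):ℤ) by push_cast; ring, ch_ofNat]
    have c2 : ch (N-j) ((l:ℤ) + 1 - (j:ℤ)) = ((N-j).choose (N-(l+1)) : ℤ) := by
      rw [show (l:ℤ) + 1 - (j:ℤ) = ((l+1-j : ℕ) : ℤ) by rw [Nat.cast_sub hj']; push_cast; ring,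
        ch_ofNat]
      congr 1
      rw [show N-(l+1) = (N-j) - (l+1-j) by omega]
      exact (Nat.choose_symm (by omega : l+1-j ≤ N-j)).symm
    rw [c1, c2]
    push_cast
    ring
  rw [← hp, (closed N (l+1) hlN).1, PP, if_neg (by omega : ¬(l+1 = 0))]
  rw [show l+1+N-1 = N+l by omega, show N-(l+1) = N+l-(2*l+1) by omega,
    Nat.choose_symm (by omega : 2*l+1 ≤ N+l),
    show 2*(l+1)-1 = 2*l+1 by omega, show N+(l+1)-1 = N+l by omega,
    show N+(l+1) = N+l+1 by ring, show 2*(l+1) = 2*l+2 by ring]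
  have key := absorb N l hlN
  have keyR : ((l:ℝ)+1) * (((N+l+1).choose (2*l+2) : ℝ) + ((N+l).choose (2*l+2) : ℝ))
      = (N:ℝ) * ((N+l).choose (2*l+1) : ℝ) := by exact_mod_cast key
  push_cast
  have hl0 : ((l:ℝ)+1) ≠ 0 := by positivity
  field_simp
  linear_combination keyR
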